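/- The Dedekind eta function satisfies the pentagonal number identity: ∏_{n≥1}(1 − q^n) = Σ_{n∈Z} (−1)^n q^{n(3n−1)/2} for |q| < 1. -/

import Mathlib

noncomputable section PentAux

open Finset Filter Topology

/-- triangular numbers `i(i+1)/2` -/
private def tri : ℕ → ℕ
  | 0 => 0
  | (i+1) => tri i + (i+1)

/-- pentagonal numbers `j(3j-1)/2` -/
private def pm : ℕ → ℕ
  | 0 => 0
  | (j+1) => pm j + (3*j+1)

/-- pentagonal numbers `j(3j+1)/2` -/
private def pp : ℕ → ℕ
  | 0 => 0
  | (j+1) => pp j + (3*j+2)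

private def Qp (q : ℂ) (n i : ℕ) : ℂ := ∏ k ∈ Finset.Ico i n, (1 - q^(k+1))

private def tt (q : ℂ) (n i : ℕ) : ℂ := (-1)^i * q^(n*i + tri i) * Qp q n i

private def uu (q : ℂ) (n i : ℕ) : ℂ :=
  (-1)^(i+1) * q^(n*i + tri i) * ((1 - q^i) * Qp q n i)

private def vv (q : ℂ) (n i : ℕ) : ℂ :=
  (-1)^(i+1) * (q^(n*i + tri i) * q^(n+1+i)) * Qp q n i

private def Rr (q : ℂ) (n : ℕ) : ℂ := ∑ i ∈ range (n+1), tt q n i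

private def Ll (q : ℂ) (n : ℕ) : ℂ :=
  ∑ j ∈ range (n+1), (-1)^j * q^(pm j) + ∑ j ∈ range n, (-1)^(j+1) * q^(pp (j+1))

private lemma Qp_top (q : ℂ) {n i : ℕ} (h : i ≤ n) :
    Qp q (n+1) i = Qp q n i * (1 - q^(n+1)) :=
  Finset.prod_Ico_succ_top h _

private lemma Qp_bot (q : ℂ) {n i : ℕ} (h : i < n) :
    Qp q n i = (1 - q^(i+1)) * Qp q n (i+1) :=
  Finset.prod_eq_prod_Ico_succ_bot h _

private lemma tt_step (q : ℂ) {n i : ℕ} (h : i ≤ n) :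
    tt q (n+1) i = tt q n i + uu q n i + vv q n i := by
  have e1 : (n+1)*i + tri i = (n*i + tri i) + i := by ring
  simp only [tt, uu, vv, Qp_top q h, e1, pow_add]
  ring

private lemma uu_zero (q : ℂ) (n : ℕ) : uu q n 0 = 0 := by
  simp [uu]

private lemma uu_shift (q : ℂ) {n i : ℕ} (h : i < n) : uu q n (i+1) = - vv q n i := by
  have e1 : n*(i+1) + tri (i+1) = (n*i + tri i) + (n+1+i) := by
    show n*(i+1) + (tri i + (i+1)) = _
    ring
  simp only [uu, vv, e1, pow_add, Qp_bot q h]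
  ring


private lemma pm_lem (n : ℕ) : n*n + tri n + (n+1+n) = pm (n+1) := by
  induction n with
  | zero => simp [tri, pm]
  | succ n IH =>
    show (n+1)*(n+1) + (tri n + (n+1)) + (n+1+1+(n+1)) = pm (n+1) + (3*(n+1)+1)
    rw [← IH]; ring

private lemma pp_lem (n : ℕ) : n*n + tri n = pp n := by
  induction n with
  | zero => simp [tri, pp]
  | succ n IH =>
    show (n+1)*(n+1) + (tri n + (n+1)) = pp n + (3*n+2)
    rw [← IH]; ring

private lemma vv_last (q : ℂ) (n : ℕ) : vv q n n = (-1)^(n+1) * q^(pm (n+1)) := by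
  simp only [vv, Qp, Finset.Ico_self, Finset.prod_empty, mul_one, ← pow_add, pm_lem]

private lemma tt_last (q : ℂ) (n : ℕ) : tt q (n+1) (n+1) = (-1)^(n+1) * q^(pp (n+1)) := by
  simp only [tt, Qp, Finset.Ico_self, Finset.prod_empty, mul_one, pp_lem]

private lemma Rr_step (q : ℂ) (n : ℕ) :
    Rr q (n+1) = Rr q n + ((-1)^(n+1) * q^(pm (n+1)) + (-1)^(n+1) * q^(pp (n+1))) := by
  have h1 : Rr q (n+1) = ∑ i ∈ range (n+1), tt q (n+1) i + tt q (n+1) (n+1) :=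
    Finset.sum_range_succ _ _
  have h2 : ∑ i ∈ range (n+1), tt q (n+1) i
      = Rr q n + (∑ i ∈ range (n+1), uu q n i + ∑ i ∈ range (n+1), vv q n i) := by
    rw [Rr, ← Finset.sum_add_distrib, ← Finset.sum_add_distrib]
    refine Finset.sum_congr rfl fun i hi => ?_
    rw [tt_step q (Nat.lt_succ_iff.mp (Finset.mem_range.mp hi))]; ring
  have h3 : ∑ i ∈ range (n+1), uu q n i = ∑ i ∈ range n, (- vv q n i) := by
    rw [Finset.sum_range_succ' (uu q n) n, uu_zero, add_zero]
    exact Finset.sum_congr rfl fun i hi => uu_shift q (Finset.mem_range.mp hi)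
  have h4 : ∑ i ∈ range (n+1), vv q n i = ∑ i ∈ range n, vv q n i + vv q n n :=
    Finset.sum_range_succ _ _
  rw [h1, h2, h3, h4, vv_last, tt_last, Finset.sum_neg_distrib]
  ring

private lemma Ll_step (q : ℂ) (n : ℕ) :
    Ll q (n+1) = Ll q n + ((-1)^(n+1) * q^(pm (n+1)) + (-1)^(n+1) * q^(pp (n+1))) := by
  simp only [Ll, Finset.sum_range_succ]
  ring

private lemma Ll_eq_Rr (q : ℂ) (n : ℕ) : Ll q n = Rr q n := by
  induction n with
  | zero => simp [Ll, Rr, tt, Qp, pm, tri]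
  | succ n IH => rw [Ll_step, Rr_step, IH]


private lemma le_tri (i : ℕ) : i ≤ tri i := by
  induction i with
  | zero => simp [tri]
  | succ i IH => show _ ≤ tri i + (i+1); omega

private lemma le_pm (j : ℕ) : j ≤ pm j := by
  induction j with
  | zero => simp [pm]
  | succ j IH => show _ ≤ pm j + (3*j+1); omega

private lemma le_pp (j : ℕ) : j ≤ pp j := by
  induction j with
  | zero => simp [pp]
  | succ j IH => show _ ≤ pp j + (3*j+2); omega

private lemma pm_int (k : ℕ) : (k:ℤ)*(3*k-1) = 2 * (pm k : ℤ) := by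
  induction k with
  | zero => simp [pm]
  | succ k IH =>
    have : (pm (k+1) : ℤ) = pm k + (3*k+1) := by
      show ((pm k + (3*k+1) : ℕ) : ℤ) = _
      push_cast; ring
    rw [this]
    push_cast
    push_cast at IH
    linear_combination IH

private lemma pp_int (k : ℕ) : (-((k:ℤ)+1))*(3*(-((k:ℤ)+1))-1) = 2 * (pp (k+1) : ℤ) := by
  induction k with
  | zero => simp [pp]
  | succ k IH =>
    have : (pp (k+2) : ℤ) = pp (k+1) + (3*(k+1)+2) := by
      show ((pp (k+1) + (3*(k+1)+2) : ℕ) : ℤ) = _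
      push_cast; ring
    rw [this]
    push_cast
    push_cast at IH
    linear_combination IH


private lemma f_pos (q : ℂ) (k : ℕ) :
    (-1:ℂ)^(k:ℤ) * q^(((k:ℤ) * (3*(k:ℤ) - 1) / 2).toNat) = (-1:ℂ)^k * q^(pm k) := by
  rw [zpow_natCast, pm_int, Int.mul_ediv_cancel_left _ two_ne_zero, Int.toNat_natCast]

private lemma f_neg (q : ℂ) (k : ℕ) :
    (-1:ℂ)^(-((k:ℤ)+1)) * q^(((-((k:ℤ)+1)) * (3*(-((k:ℤ)+1)) - 1) / 2).toNat)
      = (-1:ℂ)^(k+1) * q^(pp (k+1)) := by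
  have h1 : (-1:ℂ)^(-((k:ℤ)+1)) = (-1:ℂ)^(k+1) := by
    rw [zpow_neg, show ((k:ℤ)+1) = ((k+1 : ℕ) : ℤ) by push_cast; ring, zpow_natCast,
      ← inv_pow, inv_neg, inv_one]
  rw [h1, pp_int, Int.mul_ediv_cancel_left _ two_ne_zero, Int.toNat_natCast]

end PentAux

open Finset Filter Topology

set_option maxHeartbeats 1000000 in
theorem pentagonal_number_identity (q : ℂ) (hq : ‖q‖ < 1) :
    ∏' n : ℕ, (1 - q ^ (n + 1)) = ∑' n : ℤ, (-1 : ℂ) ^ n * q ^ (n * (3 * n - 1) / 2).toNat := by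
  have h0 : (0:ℝ) ≤ ‖q‖ := norm_nonneg q
  -- summability of the two halves
  have hgeo : Summable (fun j : ℕ => ‖q‖ ^ j) := summable_geometric_of_lt_one h0 hq
  have ha : Summable (fun j : ℕ => (-1:ℂ)^j * q^(pm j)) := by
    refine Summable.of_norm_bounded hgeo fun j => ?_
    rw [norm_mul, norm_pow, norm_pow, norm_neg, norm_one, one_pow, one_mul]
    exact pow_le_pow_of_le_one h0 hq.le (le_pm j)
  have hb : Summable (fun j : ℕ => (-1:ℂ)^(j+1) * q^(pp (j+1))) := by
    refine Summable.of_norm_bounded hgeo fun j => ?_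
    rw [norm_mul, norm_pow, norm_pow, norm_neg, norm_one, one_pow, one_mul]
    exact pow_le_pow_of_le_one h0 hq.le (le_trans (Nat.le_succ j) (le_pp (j+1)))
  -- limit of the L side
  have hL : Tendsto (fun n => Ll q n) atTop
      (𝓝 ((∑' j : ℕ, (-1:ℂ)^j * q^(pm j)) + ∑' j : ℕ, (-1:ℂ)^(j+1) * q^(pp (j+1)))) := by
    refine Tendsto.add ?_ hb.hasSum.tendsto_sum_nat
    exact ha.hasSum.tendsto_sum_nat.comp (tendsto_add_atTop_nat 1)
  -- the factors are nonzero
  have hne : ∀ n : ℕ, (1 : ℂ) - q^(n+1) ≠ 0 := by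
    intro n h
    have h1 : ‖q^(n+1)‖ < 1 := by
      rw [norm_pow]
      exact pow_lt_one₀ h0 hq (Nat.succ_ne_zero n)
    rw [sub_eq_zero] at h
    rw [← h, norm_one] at h1
    exact lt_irrefl _ h1
  -- summability of logs, hence multipliability
  have hlog : Summable fun n : ℕ => Complex.log (1 - q^(n+1)) := by
    set C : ℝ := (1 - ‖q‖)⁻¹ / 2 + 1 with hC
    refine Summable.of_norm_bounded (g := fun n => (C * ‖q‖) * ‖q‖^n)
      (hgeo.mul_left _) fun n => ?_
    have hqn : ‖-q^(n+1)‖ < 1 := by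
      rw [norm_neg, norm_pow]; exact pow_lt_one₀ h0 hq (Nat.succ_ne_zero n)
    have h1 := Complex.norm_log_one_add_le hqn
    rw [show (1:ℂ) + -q^(n+1) = 1 - q^(n+1) by ring] at h1
    refine h1.trans ?_
    rw [norm_neg, norm_pow]
    have hq1 : ‖q‖^(n+1) ≤ ‖q‖ := pow_le_of_le_one h0 hq.le (Nat.succ_ne_zero n)
    have hq0 : (0:ℝ) ≤ ‖q‖^(n+1) := pow_nonneg h0 _
    have hinv : (1 - ‖q‖^(n+1))⁻¹ ≤ (1 - ‖q‖)⁻¹ := by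
      apply inv_anti₀
      · linarith
      · linarith
    have hinv0 : (0:ℝ) ≤ (1 - ‖q‖)⁻¹ := by
      apply inv_nonneg.mpr; linarith
    have hsq : (‖q‖^(n+1))^2 ≤ ‖q‖^(n+1) := by
      nlinarith
    have : (‖q‖^(n+1))^2 * (1 - ‖q‖^(n+1))⁻¹ / 2 + ‖q‖^(n+1)
        ≤ C * ‖q‖^(n+1) := by
      rw [hC]
      have h2 : (‖q‖^(n+1))^2 * (1 - ‖q‖^(n+1))⁻¹ ≤ ‖q‖^(n+1) * (1 - ‖q‖)⁻¹ := by
        calc (‖q‖^(n+1))^2 * (1 - ‖q‖^(n+1))⁻¹ ≤ (‖q‖^(n+1))^2 * (1 - ‖q‖)⁻¹ := by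
              apply mul_le_mul_of_nonneg_left hinv (by positivity)
          _ ≤ ‖q‖^(n+1) * (1 - ‖q‖)⁻¹ := by
              apply mul_le_mul_of_nonneg_right hsq hinv0
      nlinarith
    refine this.trans ?_
    rw [pow_succ]
    ring_nf
    apply le_of_eq
    ring
  have hmult : Multipliable fun n : ℕ => (1 : ℂ) - q^(n+1) :=
    Complex.multipliable_of_summable_log hlog
  have hP : Tendsto (fun n => ∏ i ∈ range n, ((1:ℂ) - q^(i+1))) atTop
      (𝓝 (∏' n : ℕ, ((1:ℂ) - q^(n+1)))) :=
    hmult.hasProd.tendsto_prod_nat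
  set B : ℝ := Real.exp ((1 - ‖q‖)⁻¹) with hB
  have hgeo' : Summable (fun k : ℕ => ‖q‖^(k+1)) := by
    refine Summable.congr (hgeo.mul_right ‖q‖) fun k => ?_
    rw [pow_succ]
  have htsum_le : ∀ s : Finset ℕ, ∑ k ∈ s, ‖q‖^(k+1) ≤ (1 - ‖q‖)⁻¹ := by
    intro s
    calc ∑ k ∈ s, ‖q‖^(k+1) ≤ ∑' k : ℕ, ‖q‖^(k+1) :=
          Summable.sum_le_tsum s (fun k _ => pow_nonneg h0 _) hgeo'
      _ ≤ ∑' k : ℕ, ‖q‖^k := by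
          refine Summable.tsum_le_tsum (fun k => ?_) hgeo' hgeo
          exact pow_le_pow_of_le_one h0 hq.le (Nat.le_succ k)
      _ = (1 - ‖q‖)⁻¹ := tsum_geometric_of_lt_one h0 hq
  have hQbound : ∀ n i : ℕ, ‖Qp q n i‖ ≤ B := by
    intro n i
    rw [Qp, norm_prod]
    calc ∏ k ∈ Finset.Ico i n, ‖1 - q^(k+1)‖
        ≤ ∏ k ∈ Finset.Ico i n, Real.exp (‖q‖^(k+1)) := by
          refine Finset.prod_le_prod (fun k _ => norm_nonneg _) fun k _ => ?_
          calc ‖(1:ℂ) - q^(k+1)‖ ≤ ‖(1:ℂ)‖ + ‖q^(k+1)‖ := norm_sub_le _ _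
            _ = ‖q‖^(k+1) + 1 := by rw [norm_one, norm_pow]; ring
            _ ≤ Real.exp (‖q‖^(k+1)) := Real.add_one_le_exp _
      _ = Real.exp (∑ k ∈ Finset.Ico i n, ‖q‖^(k+1)) := (Real.exp_sum _ _).symm
      _ ≤ B := Real.exp_le_exp.mpr (htsum_le _)
  have hB0 : 0 ≤ B := Real.exp_nonneg _
  have hRr : ∀ n : ℕ, Rr q n = Qp q n 0 + ∑ i ∈ range n, tt q n (i+1) := by
    intro n
    rw [Rr, Finset.sum_range_succ']
    have h1 : tt q n 0 = Qp q n 0 := by simp [tt, tri]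
    rw [h1]; ring
  have hEbound : ∀ n : ℕ, ‖Rr q n - Qp q n 0‖ ≤ ((1 - ‖q‖)⁻¹ * B) * ‖q‖^n := by
    intro n
    rw [hRr n, add_sub_cancel_left]
    calc ‖∑ i ∈ range n, tt q n (i+1)‖ ≤ ∑ i ∈ range n, ‖tt q n (i+1)‖ := norm_sum_le _ _
      _ ≤ ∑ i ∈ range n, ‖q‖^(n+i) * B := by
          refine Finset.sum_le_sum fun i hi => ?_
          have hnorm : ‖tt q n (i+1)‖ = ‖q‖^(n*(i+1) + tri (i+1)) * ‖Qp q n (i+1)‖ := by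
            rw [tt, norm_mul, norm_mul, norm_pow, norm_pow, norm_neg, norm_one, one_pow,
              one_mul]
          rw [hnorm]
          refine mul_le_mul ?_ (hQbound n (i+1)) (norm_nonneg _) (pow_nonneg h0 _)
          refine pow_le_pow_of_le_one h0 hq.le ?_
          have h1 : i + 1 ≤ tri (i+1) := le_tri _
          have h2 : n ≤ n * (i+1) := Nat.le_mul_of_pos_right n (by omega)
          omega
      _ = (∑ i ∈ range n, ‖q‖^i) * (B * ‖q‖^n) := by
          rw [Finset.sum_mul]
          refine Finset.sum_congr rfl fun i _ => ?_
          rw [pow_add]; ring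
      _ ≤ (1 - ‖q‖)⁻¹ * (B * ‖q‖^n) := by
          refine mul_le_mul_of_nonneg_right ?_ (by positivity)
          calc ∑ i ∈ range n, ‖q‖^i ≤ ∑' i : ℕ, ‖q‖^i :=
                Summable.sum_le_tsum _ (fun i _ => pow_nonneg h0 _) hgeo
            _ = (1 - ‖q‖)⁻¹ := tsum_geometric_of_lt_one h0 hq
      _ = ((1 - ‖q‖)⁻¹ * B) * ‖q‖^n := by ring
  have hE : Tendsto (fun n => Rr q n - Qp q n 0) atTop (𝓝 0) := by
    refine squeeze_zero_norm hEbound ?_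
    have := (tendsto_pow_atTop_nhds_zero_of_lt_one h0 hq).const_mul ((1 - ‖q‖)⁻¹ * B)
    simpa using this
  -- identify the limit of the partial products
  have hQ0 : (fun n => Qp q n 0) = fun n => ∏ i ∈ range n, ((1:ℂ) - q^(i+1)) := by
    funext n; rw [Qp, Finset.range_eq_Ico]
  have hP' : Tendsto (fun n => Qp q n 0) atTop (𝓝 (∏' n : ℕ, ((1:ℂ) - q^(n+1)))) := by
    rw [hQ0]; exact hP
  have hL' : Tendsto (fun n => Qp q n 0) atTop
      (𝓝 (((∑' j : ℕ, (-1:ℂ)^j * q^(pm j)) + ∑' j : ℕ, (-1:ℂ)^(j+1) * q^(pp (j+1))) - 0)) := by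
    refine Tendsto.congr (fun n => ?_) (hL.sub hE)
    rw [Ll_eq_Rr]; ring
  have hkey : ∏' n : ℕ, ((1:ℂ) - q^(n+1))
      = (∑' j : ℕ, (-1:ℂ)^j * q^(pm j)) + ∑' j : ℕ, (-1:ℂ)^(j+1) * q^(pp (j+1)) := by
    have := tendsto_nhds_unique hP' hL'
    rwa [sub_zero] at this
  -- convert the ℤ-indexed sum
  have hs1 : Summable fun k : ℕ => (-1:ℂ)^((k:ℤ)) * q^((((k:ℤ) * (3*(k:ℤ) - 1)) / 2).toNat) :=
    ha.congr fun k => (f_pos q k).symm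
  have hs2 : Summable fun k : ℕ =>
      (-1:ℂ)^(-((k:ℤ)+1)) * q^(((-((k:ℤ)+1)) * (3*(-((k:ℤ)+1)) - 1) / 2).toNat) :=
    hb.congr fun k => (f_neg q k).symm
  have hts : ∑' n : ℤ, (-1:ℂ)^n * q^((n * (3*n - 1) / 2).toNat)
      = (∑' j : ℕ, (-1:ℂ)^j * q^(pm j)) + ∑' j : ℕ, (-1:ℂ)^(j+1) * q^(pp (j+1)) := by
    have h := tsum_of_nat_of_neg_add_one
      (f := fun n : ℤ => (-1:ℂ)^n * q^((n * (3*n - 1) / 2).toNat)) hs1 hs2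
    rw [h, tsum_congr (f_pos q), tsum_congr (f_neg q)]
  rw [hts, ← hkey]
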